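/- Let R be a reduced commutative ring. Then R is a W-ring if and only if for each ideal I of R, the ideal Ann(I) + Ann(Ann(I)) contains a regular element. Similarly, R is a UW-ring if and only if for each ideal I, the ideal Ann(I) + Ann(Ann(I)) contains a unit. -/
import Mathlib


/-- `R` is a W-ring: for all ideals `I, J` with `I ⊓ J = 0`, `Ann(I) + Ann(J)` contains
a regular element. -/
def IsWRing (R : Type*) [CommRing R] : Prop :=
  ∀ I J : Ideal R, I ⊓ J = ⊥ →
    ∃ c ∈ Submodule.annihilator I + Submodule.annihilator J, ∀ z : R, c * z = 0 → z = 0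

/-- `R` is a UW-ring: for all ideals `I, J` with `I ⊓ J = 0`, `Ann(I) + Ann(J)` contains
a unit. -/
def IsUWRing (R : Type*) [CommRing R] : Prop :=
  ∀ I J : Ideal R, I ⊓ J = ⊥ →
    ∃ c ∈ Submodule.annihilator I + Submodule.annihilator J, IsUnit c

lemma inf_ann_bot {R : Type*} [CommRing R] [IsReduced R] (I : Ideal R) :
    I ⊓ Submodule.annihilator I = ⊥ := by
  ext x
  simp only [Ideal.mem_inf, Ideal.mem_bot]
  constructor
  · rintro ⟨hxI, hxA⟩
    have : x * x = 0 := Submodule.mem_annihilator.1 hxA x hxI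
    exact IsNilpotent.eq_zero ⟨2, by rw [pow_two]; exact this⟩
  · rintro rfl; exact ⟨zero_mem _, zero_mem _⟩

lemma le_ann_of_inf_bot {R : Type*} [CommRing R] {I J : Ideal R} (h : I ⊓ J = ⊥) :
    J ≤ Submodule.annihilator I := by
  intro x hx
  refine Submodule.mem_annihilator.2 fun y hy => ?_
  have : x * y ∈ I ⊓ J := ⟨I.mul_mem_left x hy, J.mul_mem_right y hx⟩
  rw [h] at this
  simpa [mul_comm] using this

/-- A reduced ring is a W-ring (resp. UW-ring) iff for each ideal `I`,
`Ann(I) + Ann²(I)` contains a regular element (resp. a unit). -/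
theorem stmt6 {R : Type*} [CommRing R] [IsReduced R] :
    (IsWRing R ↔ ∀ I : Ideal R,
        ∃ c ∈ Submodule.annihilator I + Submodule.annihilator (Submodule.annihilator I),
          ∀ z : R, c * z = 0 → z = 0) ∧
    (IsUWRing R ↔ ∀ I : Ideal R,
        ∃ c ∈ Submodule.annihilator I + Submodule.annihilator (Submodule.annihilator I),
          IsUnit c) := by
  constructor
  · constructor
    · intro h I
      exact h I (Submodule.annihilator I) (inf_ann_bot I)
    · intro h I J hIJ
      obtain ⟨c, hc, hreg⟩ := h I
      refine ⟨c, ?_, hreg⟩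
      exact add_le_add le_rfl
        (Submodule.annihilator_mono (le_ann_of_inf_bot hIJ)) hc
  · constructor
    · intro h I
      exact h I (Submodule.annihilator I) (inf_ann_bot I)
    · intro h I J hIJ
      obtain ⟨c, hc, hu⟩ := h I
      refine ⟨c, ?_, hu⟩
      exact add_le_add le_rfl
        (Submodule.annihilator_mono (le_ann_of_inf_bot hIJ)) hc
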